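/- Let B be a finite acyclic simple graph (a forest) and A a subset of its vertices. Then A is closed in B (A ≤* B) if and only if no vertex of B \ A is adjacent to a vertex of A. -/

import Mathlib

open SimpleGraph

universe u

lemma acyclic_of_embedding {V : Type*} {W : Type*} {G : SimpleGraph V} {H : SimpleGraph W}
    (f : G ↪g H) (h : H.IsAcyclic) : G.IsAcyclic := by
  intro v c hc
  exact h (c.map f.toHom) (hc.map f.injective)

lemma induce_acyclic_of_subset {V : Type*} {G : SimpleGraph V} {s t : Set V} (hst : s ⊆ t)
    (h : (G.induce t).IsAcyclic) : (G.induce s).IsAcyclic :=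
  acyclic_of_embedding ⟨⟨Set.inclusion hst, Set.inclusion_injective hst⟩, Iff.rfl⟩ h

lemma exists_leaf {V : Type*} [Finite V] [Nonempty V] {G : SimpleGraph V} (hG : G.IsAcyclic) :
    ∃ v : V, ∀ w₁ w₂ : V, G.Adj v w₁ → G.Adj v w₂ → w₁ = w₂ := by
  classical
  have : Fintype V := Fintype.ofFinite V
  set P : ℕ → Prop := fun n => ∃ (u v : V) (p : G.Walk u v), p.IsPath ∧ p.length = n with hP
  have hP0 : P 0 := ⟨Classical.arbitrary V, Classical.arbitrary V, Walk.nil, Walk.IsPath.nil, rfl⟩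
  have hk : P (Nat.findGreatest P (Fintype.card V)) :=
    Nat.findGreatest_spec (Nat.zero_le _) hP0
  obtain ⟨u, v, p, hp, hlen⟩ := hk
  refine ⟨v, fun w₁ w₂ h₁ h₂ => ?_⟩
  have key : ∀ w : V, G.Adj v w → w = p.getVert (p.length - 1) := by
    intro w hw
    by_cases hsup : w ∈ p.support
    · have hq : (p.dropUntil w hsup).IsPath := hp.dropUntil hsup
      have huniq : (⟨p.dropUntil w hsup, hq⟩ : G.Path w v) = Path.singleton hw.symm :=
        hG.path_unique _ _
      have hq1 : p.dropUntil w hsup = Walk.cons hw.symm Walk.nil :=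
        congrArg Subtype.val huniq
      have hspec := p.take_spec hsup
      have hlen2 : p.length = (p.takeUntil w hsup).length + 1 := by
        conv_lhs => rw [← hspec]
        rw [Walk.length_append, hq1]
        simp
      have h3 : ((p.takeUntil w hsup).append (p.dropUntil w hsup)).getVert
          ((p.takeUntil w hsup).length) = w := by
        rw [Walk.getVert_append]
        simp
      have h4 := congrArg (fun r : G.Walk u v => r.getVert ((p.takeUntil w hsup).length)) hspec
      rw [h4] at h3
      rw [← h3, hlen2]
      simp
    · exfalso
      have hc : (p.concat hw).IsPath := by
        rw [← Walk.isPath_reverse_iff, Walk.reverse_concat, Walk.cons_isPath_iff]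
        refine ⟨by rwa [Walk.isPath_reverse_iff], ?_⟩
        rwa [Walk.support_reverse, List.mem_reverse]
      have hle : (p.concat hw).length ≤ Fintype.card V :=
        le_of_lt hc.length_lt
      have := Nat.le_findGreatest hle (show P (p.concat hw).length from ⟨u, w, p.concat hw, hc, rfl⟩)
      rw [Walk.length_concat, hlen] at this
      omega
  rw [key w₁ h₁, key w₂ h₂]

lemma image_edgeSet_subset {V : Type*} (G : SimpleGraph V) {s t : Set V} (hst : s ⊆ t) :
    Sym2.map (Set.inclusion hst) '' (G.induce s).edgeSet ⊆ (G.induce t).edgeSet := by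
  rintro _ ⟨e, he, rfl⟩
  induction e using Sym2.ind with
  | _ a b =>
    rw [SimpleGraph.mem_edgeSet] at he
    rw [Sym2.map_pair_eq, SimpleGraph.mem_edgeSet]
    exact he

lemma edge_count_mono {V : Type*} (G : SimpleGraph V) {s t : Set V} (hst : s ⊆ t)
    (ht : Finite ↥t) :
    ((G.induce s).edgeSet).ncard ≤ ((G.induce t).edgeSet).ncard := by
  have h1 : (Sym2.map (Set.inclusion hst) '' (G.induce s).edgeSet).ncard
      = ((G.induce s).edgeSet).ncard :=
    Set.ncard_image_of_injective _ (Sym2.map.injective (Set.inclusion_injective hst))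
  rw [← h1]
  exact Set.ncard_le_ncard (image_edgeSet_subset G hst) (Set.toFinite _)

lemma acyclic_edge_bound : ∀ (n : ℕ) (V : Type u) [Finite V] (G : SimpleGraph V),
    Nat.card V = n → Nonempty V → G.IsAcyclic →
    (G.edgeSet).ncard + 1 ≤ Nat.card V := by
  intro n
  induction n using Nat.strong_induction_on with
  | _ n ih =>
    intro V _ G hcard hne hG
    rcases Nat.lt_or_ge n 2 with hn | hn
    · -- n = 1 (since nonempty, n ≥ 1)
      have hn1 : Nat.card V = 1 := by
        have := Nat.card_pos (α := V)
        omega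
      have hsub : Subsingleton V := (Nat.card_eq_one_iff_unique.mp hn1).1
      have : G.edgeSet = ∅ := by
        ext e
        induction e using Sym2.ind with
        | _ a b =>
          simp only [SimpleGraph.mem_edgeSet, Set.mem_empty_iff_false, iff_false]
          intro h
          exact h.ne (Subsingleton.elim a b)
      rw [this]
      simp [hn1]
    · -- n ≥ 2
      obtain ⟨v, hv⟩ := exists_leaf hG
      set s : Set V := {v}ᶜ with hs
      have hsne : Nonempty ↥s := by
        have : Nontrivial V := Finite.one_lt_card_iff_nontrivial.mp (by omega)
        obtain ⟨w, hw⟩ := exists_ne v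
        exact ⟨⟨w, hw⟩⟩
      have hscard : Nat.card ↥s = n - 1 := by
        rw [Nat.card_coe_set_eq, hs, Set.compl_eq_univ_diff,
          Set.ncard_diff (Set.subset_univ _) (Set.toFinite _), Set.ncard_univ,
          Set.ncard_singleton, hcard]
      have hG' : (G.induce s).IsAcyclic :=
        acyclic_of_embedding ⟨⟨Subtype.val, Subtype.val_injective⟩, Iff.rfl⟩ hG
      have hIH := ih (n - 1) (by omega) ↥s (G.induce s) hscard hsne hG'
      -- split edges of G
      set E1 : Set (Sym2 V) := {e ∈ G.edgeSet | v ∈ e} with hE1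
      set E2 : Set (Sym2 V) := Sym2.map (Subtype.val : ↥s → V) '' (G.induce s).edgeSet with hE2
      have hcover : G.edgeSet ⊆ E1 ∪ E2 := by
        intro e he
        induction e using Sym2.ind with
        | _ a b =>
          by_cases hv' : v ∈ s(a, b)
          · exact Or.inl ⟨he, hv'⟩
          · right
            rw [Sym2.mem_iff] at hv'
            push_neg at hv'
            have ha : a ∈ s := by rw [hs, Set.mem_compl_singleton_iff]; exact fun h => hv'.1 h.symm
            have hb : b ∈ s := by rw [hs, Set.mem_compl_singleton_iff]; exact fun h => hv'.2 h.symm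
            rw [hE2]
            exact ⟨s(⟨a, ha⟩, ⟨b, hb⟩), (SimpleGraph.mem_edgeSet _).mpr he, by rw [Sym2.map_pair_eq]⟩
      have hE1card : E1.ncard ≤ 1 := by
        rw [Set.ncard_le_one (Set.toFinite _)]
        intro e₁ he₁ e₂ he₂
        obtain ⟨a₁, rfl⟩ := Sym2.mem_iff_exists.mp he₁.2
        obtain ⟨a₂, rfl⟩ := Sym2.mem_iff_exists.mp he₂.2
        rw [hv a₁ a₂ ((SimpleGraph.mem_edgeSet _).mp he₁.1) ((SimpleGraph.mem_edgeSet _).mp he₂.1)]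
      have hE2card : E2.ncard = ((G.induce s).edgeSet).ncard :=
        Set.ncard_image_of_injective _ (Sym2.map.injective Subtype.val_injective)
      have h1 : (G.edgeSet).ncard ≤ E1.ncard + E2.ncard :=
        le_trans (Set.ncard_le_ncard hcover (Set.toFinite _)) (Set.ncard_union_le _ _)
      omega

/-- The predimension of a finite set `A` of vertices: `|A| - e(A)`, where `e(A)` is the
number of edges of the induced subgraph on `A`. -/
noncomputable def delta {V : Type*} (G : SimpleGraph V) (A : Finset V) : ℤ :=
  (A.card : ℤ) - (Nat.card (G.induce (A : Set V)).edgeSet : ℤ)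

/-- `A` is closed in `B` (`A ≤* B`): `A ⊆ B` and `δ(C) > δ(A)` for every finite `C` with
`A ⊊ C ⊆ B`. -/
def Closed {V : Type*} (G : SimpleGraph V) (A B : Finset V) : Prop :=
  A ⊆ B ∧ ∀ C : Finset V, A ⊂ C → C ⊆ B → delta G A < delta G C

/-- `A` is weakly closed in `B` (`A ≤ B`). -/
def WClosed {V : Type*} (G : SimpleGraph V) (A B : Finset V) : Prop :=
  A ⊆ B ∧ ∀ C : Finset V, A ⊆ C → C ⊆ B → delta G A ≤ delta G C

/-- `A ≤* M` : `A` is closed in every finite superset inside the graph. -/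
def ClosedIn {V : Type*} (G : SimpleGraph V) (A : Finset V) : Prop :=
  ∀ B : Finset V, A ⊆ B → Closed G A B

def WClosedIn {V : Type*} (G : SimpleGraph V) (A : Finset V) : Prop :=
  ∀ B : Finset V, A ⊆ B → WClosed G A B

/-- `(A,B)` is a minimal pair. -/
def MinPair {V : Type*} (G : SimpleGraph V) (A B : Finset V) : Prop :=
  A ⊆ B ∧ (∀ C : Finset V, A ⊆ C → C ⊂ B → Closed G A C) ∧ ¬ Closed G A B

def WMinPair {V : Type*} (G : SimpleGraph V) (A B : Finset V) : Prop :=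
  A ⊆ B ∧ (∀ C : Finset V, A ⊆ C → C ⊂ B → WClosed G A C) ∧ ¬ WClosed G A B

/-- `B` is an intrinsic extension of `A`. -/
def IntrinsicExt {V : Type*} (G : SimpleGraph V) (A B : Finset V) : Prop :=
  A ⊆ B ∧ ∀ C : Finset V, A ⊆ C → C ⊂ B → ¬ Closed G C B

def WIntrinsicExt {V : Type*} (G : SimpleGraph V) (A B : Finset V) : Prop :=
  A ⊆ B ∧ ∀ C : Finset V, A ⊆ C → C ⊂ B → ¬ WClosed G C B

/-- The closure `cl*_M(N)`. -/
def clStar {V : Type*} (G : SimpleGraph V) (N : Set V) : Set V :=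
  {b | ∃ A E : Finset V, (A : Set V) ⊆ N ∧ IntrinsicExt G A E ∧ b ∈ E}

/-- The weak closure `cl_M(N)`. -/
def clWeak {V : Type*} (G : SimpleGraph V) (N : Set V) : Set V :=
  {b | ∃ A E : Finset V, (A : Set V) ⊆ N ∧ WIntrinsicExt G A E ∧ b ∈ E}

/-- Let `B` be a finite forest and `A ⊆ B`. Then `A` is closed in `B`
(`A ≤* B`) iff no vertex of `B \ A` is adjacent to a vertex of `A`. -/
theorem stmt_2 {V : Type*} [DecidableEq V] (G : SimpleGraph V) (A B : Finset V)
    (hAB : A ⊆ B) (hB : (G.induce (B : Set V)).IsAcyclic) :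
    Closed G A B ↔ ∀ b ∈ B \ A, ∀ a ∈ A, ¬ G.Adj b a := by
  constructor
  · rintro ⟨-, h2⟩ b hb a ha hadj
    rw [Finset.mem_sdiff] at hb
    set C := insert b A with hC
    have hAC : A ⊂ C := Finset.ssubset_insert hb.2
    have hCB : C ⊆ B := Finset.insert_subset hb.1 hAB
    have hlt := h2 C hAC hCB
    have hsub : (A : Set V) ⊆ (C : Set V) := by
      intro x hx
      simp only [hC, Finset.coe_insert, Set.mem_insert_iff]
      exact Or.inr hx
    have himg : Sym2.map (Set.inclusion hsub) '' (G.induce (A : Set V)).edgeSet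
        ⊆ (G.induce (C : Set V)).edgeSet := image_edgeSet_subset G hsub
    have hbC : b ∈ (C : Set V) := by simp [hC]
    have haC : a ∈ (C : Set V) := by simp [hC, ha]
    have hnew_mem : s(⟨b, hbC⟩, ⟨a, haC⟩) ∈ (G.induce (C : Set V)).edgeSet :=
      (SimpleGraph.mem_edgeSet _).mpr hadj
    have hnew_not : s(⟨b, hbC⟩, ⟨a, haC⟩) ∉
        Sym2.map (Set.inclusion hsub) '' (G.induce (A : Set V)).edgeSet := by
      rintro ⟨e, he, heq⟩
      induction e using Sym2.ind with
      | _ x y =>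
        rw [Sym2.map_pair_eq, Sym2.eq_iff] at heq
        rcases heq with ⟨h1, -⟩ | ⟨-, h2'⟩
        · have : b = x.val := (congrArg Subtype.val h1).symm
          exact hb.2 (this ▸ x.2)
        · have : b = y.val := (congrArg Subtype.val h2').symm
          exact hb.2 (this ▸ y.2)
    have h1 : ((G.induce (A : Set V)).edgeSet).ncard + 1
        ≤ ((G.induce (C : Set V)).edgeSet).ncard := by
      have hsub2 : insert s(⟨b, hbC⟩, ⟨a, haC⟩)
          (Sym2.map (Set.inclusion hsub) '' (G.induce (A : Set V)).edgeSet)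
          ⊆ (G.induce (C : Set V)).edgeSet := Set.insert_subset hnew_mem himg
      have h3 := Set.ncard_le_ncard hsub2 (Set.toFinite _)
      rwa [Set.ncard_insert_of_notMem hnew_not (Set.toFinite _),
        Set.ncard_image_of_injective _
          (Sym2.map.injective (Set.inclusion_injective hsub))] at h3
    have hcC : C.card = A.card + 1 := Finset.card_insert_of_notMem hb.2
    simp only [delta, Nat.card_coe_set_eq] at hlt
    omega
  · intro hyp
    refine ⟨hAB, fun C hAC hCB => ?_⟩
    set D := C \ A with hD
    have hDne : D.Nonempty := by
      obtain ⟨x, hxC, hxA⟩ := Finset.exists_of_ssubset hAC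
      exact ⟨x, Finset.mem_sdiff.mpr ⟨hxC, hxA⟩⟩
    have hDB : (D : Set V) ⊆ (B : Set V) := by
      intro x hx
      exact hCB (Finset.sdiff_subset (Finset.mem_coe.mp hx))
    have hDacyc : (G.induce (D : Set V)).IsAcyclic := induce_acyclic_of_subset hDB hB
    have hDne' : Nonempty ↥(D : Set V) := by
      obtain ⟨x, hx⟩ := hDne
      exact ⟨⟨x, hx⟩⟩
    have hbound := acyclic_edge_bound (Nat.card ↥(D : Set V)) ↥(D : Set V)
      (G.induce (D : Set V)) rfl hDne' hDacyc
    have hDcard : Nat.card ↥(D : Set V) = D.card := by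
      rw [Nat.card_coe_set_eq, Set.ncard_coe_finset]
    have hAC' : (A : Set V) ⊆ (C : Set V) := Finset.coe_subset.mpr hAC.subset
    have hDC' : (D : Set V) ⊆ (C : Set V) := Finset.coe_subset.mpr (Finset.sdiff_subset)
    have hcover : (G.induce (C : Set V)).edgeSet ⊆
        (Sym2.map (Set.inclusion hAC') '' (G.induce (A : Set V)).edgeSet) ∪
        (Sym2.map (Set.inclusion hDC') '' (G.induce (D : Set V)).edgeSet) := by
      intro e he
      induction e using Sym2.ind with
      | _ x y =>
        have hadj : G.Adj x.val y.val := (SimpleGraph.mem_edgeSet _).mp he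
        by_cases hx : x.val ∈ A <;> by_cases hy : y.val ∈ A
        · left
          refine ⟨s(⟨x.val, hx⟩, ⟨y.val, hy⟩), (SimpleGraph.mem_edgeSet _).mpr hadj, ?_⟩
          rw [Sym2.map_pair_eq]
        · exact absurd hadj.symm
            (hyp y.val (Finset.mem_sdiff.mpr ⟨hCB (Finset.mem_coe.mp y.2), hy⟩) x.val hx)
        · exact absurd hadj
            (hyp x.val (Finset.mem_sdiff.mpr ⟨hCB (Finset.mem_coe.mp x.2), hx⟩) y.val hy)
        · right
          have hxD : x.val ∈ (D : Set V) := by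
            rw [hD]; exact Finset.mem_coe.mpr (Finset.mem_sdiff.mpr ⟨Finset.mem_coe.mp x.2, hx⟩)
          have hyD : y.val ∈ (D : Set V) := by
            rw [hD]; exact Finset.mem_coe.mpr (Finset.mem_sdiff.mpr ⟨Finset.mem_coe.mp y.2, hy⟩)
          refine ⟨s(⟨x.val, hxD⟩, ⟨y.val, hyD⟩), (SimpleGraph.mem_edgeSet _).mpr hadj, ?_⟩
          rw [Sym2.map_pair_eq]
    have hsplit : ((G.induce (C : Set V)).edgeSet).ncard ≤
        ((G.induce (A : Set V)).edgeSet).ncard + ((G.induce (D : Set V)).edgeSet).ncard := by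
      calc ((G.induce (C : Set V)).edgeSet).ncard
          ≤ _ := Set.ncard_le_ncard hcover (Set.toFinite _)
        _ ≤ _ := Set.ncard_union_le _ _
        _ = _ := by
            rw [Set.ncard_image_of_injective _
              (Sym2.map.injective (Set.inclusion_injective hAC')),
              Set.ncard_image_of_injective _
              (Sym2.map.injective (Set.inclusion_injective hDC'))]
    have hcC : D.card + A.card = C.card := Finset.card_sdiff_add_card_eq_card hAC.subset
    have hApos : A.card < C.card := Finset.card_lt_card hAC
    simp only [delta, Nat.card_coe_set_eq]
    rw [hDcard] at hbound
    omega
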